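/- For every atomless measure space (Ω, Σ, μ) with μ semi-finite and every 1 ≤ p < ∞, the space Lᵖ(μ) satisfies property (S'): for all unit vectors f ≠ g and δ > 0 there exists h with ‖h‖ₚ < δ such that one of ‖f+h‖ₚ, ‖g+h‖ₚ is > 1 and the other is < 1. -/

import Mathlib

open MeasureTheory ENNReal

private lemma abs_reflect_lt {x t : ℝ} (ht : 0 < t) (hx : x < t) : |x| < |x + -(2 * t)| := by
  rcases abs_cases x with ⟨h1, h2⟩ | ⟨h1, h2⟩ <;>
    rcases abs_cases (x + -(2 * t)) with ⟨h3, h4⟩ | ⟨h3, h4⟩ <;> linarith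

private lemma abs_reflect_gt {x t : ℝ} (ht : 0 < t) (hx : t < x) : |x + -(2 * t)| < |x| := by
  rcases abs_cases x with ⟨h1, h2⟩ | ⟨h1, h2⟩ <;>
    rcases abs_cases (x + -(2 * t)) with ⟨h3, h4⟩ | ⟨h3, h4⟩ <;> linarith

/-- From the atomless hypothesis: any set of positive finite measure contains subsets of
arbitrarily small positive measure. -/
private lemma exists_small_subset {Ω : Type*} [MeasurableSpace Ω] {μ : Measure Ω}
    (hatomless : ∀ s : Set Ω, MeasurableSet s → 0 < μ s →
      ∃ t ⊆ s, MeasurableSet t ∧ 0 < μ t ∧ μ t < μ s)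
    {B : Set Ω} (hB : MeasurableSet B) (h0 : 0 < μ B) (hfin : μ B < ∞)
    {ε : ℝ≥0∞} (hε : 0 < ε) :
    ∃ C, C ⊆ B ∧ MeasurableSet C ∧ 0 < μ C ∧ μ C < ε := by
  set T : Set ℝ≥0∞ := {m | ∃ C, C ⊆ B ∧ MeasurableSet C ∧ 0 < μ C ∧ μ C = m} with hT
  have hBT : μ B ∈ T := ⟨B, subset_rfl, hB, h0, rfl⟩
  have hcB : sInf T ≤ μ B := sInf_le hBT
  have hcfin : sInf T < ∞ := lt_of_le_of_lt hcB hfin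
  have hc0 : sInf T = 0 := by
    by_contra hc
    have hcpos : 0 < sInf T := pos_iff_ne_zero.mpr hc
    have h2 : sInf T < sInf T + sInf T := ENNReal.lt_add_right hcfin.ne hc
    obtain ⟨m, hmT, hm⟩ := sInf_lt_iff.mp h2
    obtain ⟨B₁, hB₁B, hB₁m, hB₁pos, rfl⟩ := hmT
    obtain ⟨B₂, hB₂₁, hB₂m, hB₂pos, hB₂lt⟩ := hatomless B₁ hB₁m hB₁pos
    have hdiff : μ B₂ + μ (B₁ \ B₂) = μ B₁ := by
      rw [measure_add_diff hB₂m.nullMeasurableSet B₁, Set.union_eq_self_of_subset_left hB₂₁]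
    have hdpos : 0 < μ (B₁ \ B₂) := by
      rcases (zero_le : 0 ≤ μ (B₁ \ B₂)).lt_or_eq with h | h
      · exact h
      · rw [← h, add_zero] at hdiff
        exact absurd hdiff hB₂lt.ne
    have h1 : sInf T ≤ μ B₂ := sInf_le ⟨B₂, hB₂₁.trans hB₁B, hB₂m, hB₂pos, rfl⟩
    have h2' : sInf T ≤ μ (B₁ \ B₂) :=
      sInf_le ⟨B₁ \ B₂, Set.diff_subset.trans hB₁B, hB₁m.diff hB₂m, hdpos, rfl⟩
    have hcontra : μ B₁ < μ B₁ :=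
      calc μ B₁ < sInf T + sInf T := hm
        _ ≤ μ B₂ + μ (B₁ \ B₂) := add_le_add h1 h2'
        _ = μ B₁ := hdiff
    exact absurd hcontra (lt_irrefl _)
  obtain ⟨m, hmT, hm⟩ := sInf_lt_iff.mp (hc0 ▸ hε : sInf T < ε)
  obtain ⟨C, hCB, hCm, hCpos, rfl⟩ := hmT
  exact ⟨C, hCB, hCm, hCpos, hm⟩

/-- Norm of an `Lp` element expressed via the lintegral of the `p.toReal` power. -/
private lemma norm_eq_I {Ω : Type*} [MeasurableSpace Ω] {μ : Measure Ω}
    {p : ℝ≥0∞} (hp0 : p ≠ 0) (hp' : p ≠ ∞) (u : Lp ℝ p μ) :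
    ‖u‖ = (∫⁻ ω, (‖u ω‖₊ : ℝ≥0∞) ^ p.toReal ∂μ).toReal ^ (1 / p.toReal) := by
  rw [Lp.norm_def, eLpNorm_eq_lintegral_rpow_enorm_toReal hp0 hp', ENNReal.toReal_rpow]; rfl

private lemma I_ne_top {Ω : Type*} [MeasurableSpace Ω] {μ : Measure Ω}
    {p : ℝ≥0∞} (hp0 : p ≠ 0) (hp' : p ≠ ∞) (u : Lp ℝ p μ) :
    (∫⁻ ω, (‖u ω‖₊ : ℝ≥0∞) ^ p.toReal ∂μ) ≠ ∞ := by
  intro htop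
  have := Lp.eLpNorm_ne_top u
  rw [eLpNorm_eq_lintegral_rpow_enorm_toReal hp0 hp'] at this
  change (∫⁻ ω, (‖u ω‖₊ : ℝ≥0∞) ^ p.toReal ∂μ) ^ (1 / p.toReal) ≠ ∞ at this
  rw [htop] at this
  have hq0 : 0 < p.toReal := ENNReal.toReal_pos hp0 hp'
  rw [ENNReal.top_rpow_of_pos (by positivity)] at this
  exact this rfl

/-- The key perturbation lemma: if `f < t < g` (a.e.) on a set `B` of positive finite
measure, with `t > 0`, then we can perturb by a small `h` pushing `‖f + h‖` above `1`
and `‖g + h‖` below `1`. -/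
private lemma aux_key {Ω : Type*} [MeasurableSpace Ω] {μ : Measure Ω}
    (hatomless : ∀ s : Set Ω, MeasurableSet s → 0 < μ s →
      ∃ t ⊆ s, MeasurableSet t ∧ 0 < μ t ∧ μ t < μ s)
    {p : ℝ≥0∞} (hp : 1 ≤ p) (hp' : p ≠ ∞)
    (f g : Lp ℝ p μ) (hf : ‖f‖ = 1) (hg : ‖g‖ = 1)
    {t : ℝ} (ht : 0 < t) {B : Set Ω} (hBm : MeasurableSet B)
    (hB0 : 0 < μ B) (hBfin : μ B < ∞)
    (hfg : ∀ᵐ ω ∂μ, ω ∈ B → f ω < t ∧ t < g ω)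
    {δ : ℝ} (hδ : 0 < δ) :
    ∃ h : Lp ℝ p μ, ‖h‖ < δ ∧ 1 < ‖f + h‖ ∧ ‖g + h‖ < 1 := by
  have hp0 : p ≠ 0 := (zero_lt_one.trans_le hp).ne'
  set q : ℝ := p.toReal with hq
  have hq0 : 0 < q := ENNReal.toReal_pos hp0 hp'
  -- choose a small subset
  have hεpos : 0 < ENNReal.ofReal ((δ / (2 * t)) ^ q) := by
    rw [ENNReal.ofReal_pos]
    exact Real.rpow_pos_of_pos (div_pos hδ (by linarith)) q
  obtain ⟨C, hCB, hCm, hC0, hCε⟩ := exists_small_subset hatomless hBm hB0 hBfin hεpos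
  have hCfin : μ C ≠ ∞ := (hCε.trans ENNReal.ofReal_lt_top).ne
  set h : Lp ℝ p μ := indicatorConstLp p hCm hCfin (-(2 * t)) with hh_def
  have hh_coe : ⇑h =ᵐ[μ] C.indicator (fun _ => -(2 * t)) := indicatorConstLp_coeFn
  -- norm of h
  have hnormh : ‖h‖ < δ := by
    rw [hh_def, norm_indicatorConstLp hp0 hp']
    have h1 : (μ C).toReal < (δ / (2 * t)) ^ q := by
      rw [← ENNReal.lt_ofReal_iff_toReal_lt hCfin]
      exact hCε
    have h2 : (μ C).toReal ^ (1 / q) < ((δ / (2 * t)) ^ q) ^ (1 / q) :=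
      Real.rpow_lt_rpow ENNReal.toReal_nonneg h1 (by positivity)
    have h3 : ((δ / (2 * t)) ^ q) ^ (1 / q) = δ / (2 * t) := by
      rw [← Real.rpow_mul (le_of_lt (div_pos hδ (by linarith))), mul_one_div_cancel hq0.ne',
        Real.rpow_one]
    rw [h3] at h2
    have : ‖(-(2 * t))‖ = 2 * t := by
      rw [norm_neg, Real.norm_eq_abs, abs_of_pos (by linarith)]
    rw [this]
    calc 2 * t * (μ C).toReal ^ (1 / q) < 2 * t * (δ / (2 * t)) := by
          exact mul_lt_mul_of_pos_left h2 (by linarith)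
      _ = δ := by field_simp
    -- done
  refine ⟨h, hnormh, ?_, ?_⟩
  -- abbreviation
  · -- 1 < ‖f + h‖
    have hadd : ⇑(f + h) =ᵐ[μ] ⇑f + ⇑h := Lp.coeFn_add f h
    have hle : ∀ᵐ ω ∂μ, (‖(f : Ω → ℝ) ω‖₊ : ℝ≥0∞) ^ q ≤ (‖(⇑(f + h)) ω‖₊ : ℝ≥0∞) ^ q := by
      filter_upwards [hadd, hh_coe, hfg] with ω h1 h2 h3
      rw [h1]
      by_cases hωC : ω ∈ C
      · have hft : f ω < t := (h3 (hCB hωC)).1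
        have : |f ω| < |f ω + -(2 * t)| := abs_reflect_lt ht hft
        have hnn : (‖f ω‖₊ : ℝ≥0∞) ≤ ‖(⇑f + ⇑h) ω‖₊ := by
          simp only [Pi.add_apply, h2, Set.indicator_of_mem hωC]
          rw [ENNReal.coe_le_coe, ← NNReal.coe_le_coe, coe_nnnorm, coe_nnnorm,
            Real.norm_eq_abs, Real.norm_eq_abs]
          exact this.le
        exact ENNReal.rpow_le_rpow hnn hq0.le
      · have : (⇑f + ⇑h) ω = f ω := by
          simp [Pi.add_apply, h2, Set.indicator_of_notMem hωC]
        rw [this]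
    have hlt : ∀ᵐ ω ∂μ, ω ∈ C →
        (‖(f : Ω → ℝ) ω‖₊ : ℝ≥0∞) ^ q < (‖(⇑(f + h)) ω‖₊ : ℝ≥0∞) ^ q := by
      filter_upwards [hadd, hh_coe, hfg] with ω h1 h2 h3 hωC
      rw [h1]
      have hft : f ω < t := (h3 (hCB hωC)).1
      have habs : |f ω| < |f ω + -(2 * t)| := abs_reflect_lt ht hft
      have hnn : (‖f ω‖₊ : ℝ≥0∞) < ‖(⇑f + ⇑h) ω‖₊ := by
        simp only [Pi.add_apply, h2, Set.indicator_of_mem hωC]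
        rw [ENNReal.coe_lt_coe, ← NNReal.coe_lt_coe, coe_nnnorm, coe_nnnorm,
          Real.norm_eq_abs, Real.norm_eq_abs]
        exact habs
      exact ENNReal.rpow_lt_rpow hnn hq0
    have hI : (∫⁻ ω, (‖(f : Ω → ℝ) ω‖₊ : ℝ≥0∞) ^ q ∂μ)
        < ∫⁻ ω, (‖(⇑(f + h)) ω‖₊ : ℝ≥0∞) ^ q ∂μ := by
      refine lintegral_strict_mono_of_ae_le_of_ae_lt_on ?_ (I_ne_top hp0 hp' f) hle hC0.ne' hlt
      exact ((Lp.aestronglyMeasurable (f + h)).aemeasurable.nnnorm.coe_nnreal_ennreal).pow_const q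
        |>.congr (by rfl)
    calc (1:ℝ) = (∫⁻ ω, (‖(f : Ω → ℝ) ω‖₊ : ℝ≥0∞) ^ q ∂μ).toReal ^ (1 / q) := by
          rw [← norm_eq_I hp0 hp' f, hf]
      _ < (∫⁻ ω, (‖(⇑(f + h)) ω‖₊ : ℝ≥0∞) ^ q ∂μ).toReal ^ (1 / q) :=
          Real.rpow_lt_rpow ENNReal.toReal_nonneg
            ((ENNReal.toReal_lt_toReal (I_ne_top hp0 hp' f) (I_ne_top hp0 hp' (f + h))).mpr hI)
            (one_div_pos.mpr hq0)
      _ = ‖f + h‖ := (norm_eq_I hp0 hp' (f + h)).symm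
  · -- ‖g + h‖ < 1
    have hadd : ⇑(g + h) =ᵐ[μ] ⇑g + ⇑h := Lp.coeFn_add g h
    have hle : ∀ᵐ ω ∂μ, (‖(⇑(g + h)) ω‖₊ : ℝ≥0∞) ^ q ≤ (‖(g : Ω → ℝ) ω‖₊ : ℝ≥0∞) ^ q := by
      filter_upwards [hadd, hh_coe, hfg] with ω h1 h2 h3
      rw [h1]
      by_cases hωC : ω ∈ C
      · have hgt : t < g ω := (h3 (hCB hωC)).2
        have habs : |g ω + -(2 * t)| < |g ω| := abs_reflect_gt ht hgt
        have hnn : (‖(⇑g + ⇑h) ω‖₊ : ℝ≥0∞) ≤ ‖g ω‖₊ := by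
          simp only [Pi.add_apply, h2, Set.indicator_of_mem hωC]
          rw [ENNReal.coe_le_coe, ← NNReal.coe_le_coe, coe_nnnorm, coe_nnnorm,
            Real.norm_eq_abs, Real.norm_eq_abs]
          exact habs.le
        exact ENNReal.rpow_le_rpow hnn hq0.le
      · have : (⇑g + ⇑h) ω = g ω := by
          simp [Pi.add_apply, h2, Set.indicator_of_notMem hωC]
        rw [this]
    have hlt : ∀ᵐ ω ∂μ, ω ∈ C →
        (‖(⇑(g + h)) ω‖₊ : ℝ≥0∞) ^ q < (‖(g : Ω → ℝ) ω‖₊ : ℝ≥0∞) ^ q := by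
      filter_upwards [hadd, hh_coe, hfg] with ω h1 h2 h3 hωC
      rw [h1]
      have hgt : t < g ω := (h3 (hCB hωC)).2
      have habs : |g ω + -(2 * t)| < |g ω| := abs_reflect_gt ht hgt
      have hnn : (‖(⇑g + ⇑h) ω‖₊ : ℝ≥0∞) < ‖g ω‖₊ := by
        simp only [Pi.add_apply, h2, Set.indicator_of_mem hωC]
        rw [ENNReal.coe_lt_coe, ← NNReal.coe_lt_coe, coe_nnnorm, coe_nnnorm,
          Real.norm_eq_abs, Real.norm_eq_abs]
        exact habs
      exact ENNReal.rpow_lt_rpow hnn hq0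
    have hI : (∫⁻ ω, (‖(⇑(g + h)) ω‖₊ : ℝ≥0∞) ^ q ∂μ)
        < ∫⁻ ω, (‖(g : Ω → ℝ) ω‖₊ : ℝ≥0∞) ^ q ∂μ := by
      refine lintegral_strict_mono_of_ae_le_of_ae_lt_on ?_ (I_ne_top hp0 hp' (g + h))
        hle hC0.ne' hlt
      exact ((Lp.aestronglyMeasurable g).aemeasurable.nnnorm.coe_nnreal_ennreal).pow_const q
        |>.congr (by rfl)
    calc ‖g + h‖ = (∫⁻ ω, (‖(⇑(g + h)) ω‖₊ : ℝ≥0∞) ^ q ∂μ).toReal ^ (1 / q) :=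
          norm_eq_I hp0 hp' (g + h)
      _ < (∫⁻ ω, (‖(g : Ω → ℝ) ω‖₊ : ℝ≥0∞) ^ q ∂μ).toReal ^ (1 / q) :=
          Real.rpow_lt_rpow ENNReal.toReal_nonneg
            ((ENNReal.toReal_lt_toReal (I_ne_top hp0 hp' (g + h)) (I_ne_top hp0 hp' g)).mpr hI)
            (one_div_pos.mpr hq0)
      _ = 1 := by rw [← norm_eq_I hp0 hp' g, hg]

private lemma aux2 {Ω : Type*} [MeasurableSpace Ω] {μ : Measure Ω}
    (hatomless : ∀ s : Set Ω, MeasurableSet s → 0 < μ s →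
      ∃ t ⊆ s, MeasurableSet t ∧ 0 < μ t ∧ μ t < μ s)
    {p : ℝ≥0∞} (hp : 1 ≤ p) (hp' : p ≠ ∞)
    (f g : Lp ℝ p μ) (hf : ‖f‖ = 1) (hg : ‖g‖ = 1)
    {t : ℝ} (ht : t ≠ 0) {B : Set Ω} (hBm : MeasurableSet B)
    (hB0 : 0 < μ B) (hBfin : μ B < ∞)
    (hfg : ∀ᵐ ω ∂μ, ω ∈ B → f ω < t ∧ t < g ω)
    {δ : ℝ} (hδ : 0 < δ) :
    ∃ h : Lp ℝ p μ, ‖h‖ < δ ∧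
      ((1 < ‖f + h‖ ∧ ‖g + h‖ < 1) ∨ (‖f + h‖ < 1 ∧ 1 < ‖g + h‖)) := by
  haveI : Fact (1 ≤ p) := ⟨hp⟩
  rcases ht.lt_or_gt with htneg | htpos
  · -- t < 0 : apply the key lemma to (-g, -f, -t)
    have hfg' : ∀ᵐ ω ∂μ, ω ∈ B → (-g : Lp ℝ p μ) ω < -t ∧ -t < (-f : Lp ℝ p μ) ω := by
      filter_upwards [Lp.coeFn_neg g, Lp.coeFn_neg f, hfg] with ω h1 h2 h3 hωB
      rw [h1, h2]
      simp only [Pi.neg_apply]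
      exact ⟨by linarith [(h3 hωB).2], by linarith [(h3 hωB).1]⟩
    obtain ⟨h', hn', h1', h2'⟩ := aux_key hatomless hp hp' (-g) (-f)
      ((norm_neg g).trans hg) ((norm_neg f).trans hf)
      (by linarith : (0:ℝ) < -t) hBm hB0 hBfin hfg' hδ
    refine ⟨-h', by rwa [norm_neg], Or.inr ⟨?_, ?_⟩⟩
    · have : f + -h' = -(-f + h') := by abel
      rw [this, norm_neg]
      exact h2'
    · have : g + -h' = -(-g + h') := by abel
      rw [this, norm_neg]
      exact h1'
  · obtain ⟨h, hn, h1, h2⟩ := aux_key hatomless hp hp' f g hf hg htpos hBm hB0 hBfin hfg hδ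
    exact ⟨h, hn, Or.inl ⟨h1, h2⟩⟩

/-- From `f ≠ g` produce a nonzero rational strictly between them on a set of positive
finite measure (in one of the two orders). -/
private lemma exists_separating {Ω : Type*} [MeasurableSpace Ω] {μ : Measure Ω}
    (hsemifinite : ∀ s : Set Ω, MeasurableSet s → μ s = ∞ →
      ∃ t ⊆ s, MeasurableSet t ∧ 0 < μ t ∧ μ t < ∞)
    {p : ℝ≥0∞} (f g : Lp ℝ p μ) (hne : f ≠ g) :
    ∃ (r : ℚ) (B : Set Ω), r ≠ 0 ∧ MeasurableSet B ∧ 0 < μ B ∧ μ B < ∞ ∧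
      ((∀ ω ∈ B, f ω < (r : ℝ) ∧ (r : ℝ) < g ω) ∨
       (∀ ω ∈ B, g ω < (r : ℝ) ∧ (r : ℝ) < f ω)) := by
  have hnae : ¬ (⇑f =ᵐ[μ] ⇑g) := fun hae => hne (Lp.ext hae)
  have hD : μ {ω | ¬ (f ω = g ω)} ≠ 0 := fun h0 => hnae (ae_iff.mpr h0)
  set S : ℚ → Set Ω := fun r =>
    {ω | (f ω < (r : ℝ) ∧ (r : ℝ) < g ω) ∨ (g ω < (r : ℝ) ∧ (r : ℝ) < f ω)} with hS
  have hcover : {ω | ¬ (f ω = g ω)} ⊆ ⋃ r : {r : ℚ // r ≠ 0}, S r.1 := by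
    intro ω hω
    have key : ∀ a b : ℝ, a < b → ∃ r : ℚ, r ≠ 0 ∧ a < (r : ℝ) ∧ (r : ℝ) < b := by
      intro a b hab
      obtain ⟨r₁, hr₁a, hr₁b⟩ := exists_rat_btwn hab
      obtain ⟨r₂, hr₂a, hr₂b⟩ := exists_rat_btwn hr₁a
      by_cases hr₁0 : r₁ = 0
      · refine ⟨r₂, ?_, hr₂a, hr₂b.trans hr₁b⟩
        intro h0
        rw [h0, hr₁0] at hr₂b
        exact lt_irrefl _ (by exact_mod_cast hr₂b)
      · exact ⟨r₁, hr₁0, hr₁a, hr₁b⟩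
    rcases lt_or_gt_of_ne hω with hlt | hgt
    · obtain ⟨r, hr0, h1, h2⟩ := key _ _ hlt
      exact Set.mem_iUnion.mpr ⟨⟨r, hr0⟩, Or.inl ⟨h1, h2⟩⟩
    · obtain ⟨r, hr0, h1, h2⟩ := key _ _ hgt
      exact Set.mem_iUnion.mpr ⟨⟨r, hr0⟩, Or.inr ⟨h1, h2⟩⟩
  have hex : ∃ r : ℚ, r ≠ 0 ∧ μ (S r) ≠ 0 := by
    by_contra hall
    push_neg at hall
    have hnull : μ (⋃ r : {r : ℚ // r ≠ 0}, S r.1) = 0 :=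
      measure_iUnion_null fun r => hall r.1 r.2
    exact hD (measure_mono_null hcover hnull)
  obtain ⟨r, hr0, hSr⟩ := hex
  have hFm : Measurable (⇑f) := (Lp.stronglyMeasurable f).measurable
  have hGm : Measurable (⇑g) := (Lp.stronglyMeasurable g).measurable
  have hA1m : MeasurableSet {ω | f ω < (r : ℝ) ∧ (r : ℝ) < g ω} := by
    rw [Set.setOf_and]
    exact (measurableSet_lt hFm measurable_const).inter (measurableSet_lt measurable_const hGm)
  have hA2m : MeasurableSet {ω | g ω < (r : ℝ) ∧ (r : ℝ) < f ω} := by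
    rw [Set.setOf_and]
    exact (measurableSet_lt hGm measurable_const).inter (measurableSet_lt measurable_const hFm)
  have hSeq : S r = {ω | f ω < (r : ℝ) ∧ (r : ℝ) < g ω} ∪
      {ω | g ω < (r : ℝ) ∧ (r : ℝ) < f ω} := by
    ext ω; simp [hS, Set.mem_union, Set.mem_setOf_eq]
  -- one of the two parts has positive measure
  have hpart : μ {ω | f ω < (r : ℝ) ∧ (r : ℝ) < g ω} ≠ 0 ∨
      μ {ω | g ω < (r : ℝ) ∧ (r : ℝ) < f ω} ≠ 0 := by
    by_contra hboth
    push_neg at hboth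
    apply hSr
    rw [hSeq]
    exact measure_union_null hboth.1 hboth.2
  -- helper to shrink to finite measure
  have shrink : ∀ A : Set Ω, MeasurableSet A → μ A ≠ 0 →
      ∃ B ⊆ A, MeasurableSet B ∧ 0 < μ B ∧ μ B < ∞ := by
    intro A hAm hA0
    rcases eq_or_ne (μ A) ∞ with hAtop | hAfin
    · obtain ⟨B, hBA, hBm, hB0, hBfin⟩ := hsemifinite A hAm hAtop
      exact ⟨B, hBA, hBm, hB0, hBfin⟩
    · exact ⟨A, subset_rfl, hAm, pos_iff_ne_zero.mpr hA0, lt_top_iff_ne_top.mpr hAfin⟩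
  rcases hpart with h1 | h2
  · obtain ⟨B, hBA, hBm, hB0, hBfin⟩ := shrink _ hA1m h1
    exact ⟨r, B, hr0, hBm, hB0, hBfin, Or.inl fun ω hω => hBA hω⟩
  · obtain ⟨B, hBA, hBm, hB0, hBfin⟩ := shrink _ hA2m h2
    exact ⟨r, B, hr0, hBm, hB0, hBfin, Or.inr fun ω hω => hBA hω⟩

theorem stmt13 {Ω : Type*} [MeasurableSpace Ω] (μ : Measure Ω)
    (hatomless : ∀ s : Set Ω, MeasurableSet s → 0 < μ s →
      ∃ t ⊆ s, MeasurableSet t ∧ 0 < μ t ∧ μ t < μ s)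
    (hsemifinite : ∀ s : Set Ω, MeasurableSet s → μ s = ∞ →
      ∃ t ⊆ s, MeasurableSet t ∧ 0 < μ t ∧ μ t < ∞)
    (p : ℝ≥0∞) (hp : 1 ≤ p) (hp' : p ≠ ∞) :
    ∀ f g : Lp ℝ p μ, ‖f‖ = 1 → ‖g‖ = 1 → f ≠ g → ∀ δ : ℝ, 0 < δ →
      ∃ h : Lp ℝ p μ, ‖h‖ < δ ∧
        ((1 < ‖f + h‖ ∧ ‖g + h‖ < 1) ∨ (‖f + h‖ < 1 ∧ 1 < ‖g + h‖)) := by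
  intro f g hf hg hne δ hδ
  obtain ⟨r, B, hr0, hBm, hB0, hBfin, hcase⟩ := exists_separating hsemifinite f g hne
  have hr0' : (r : ℝ) ≠ 0 := by exact_mod_cast hr0
  rcases hcase with hc | hc
  · exact aux2 hatomless hp hp' f g hf hg hr0' hBm hB0 hBfin
      (Filter.Eventually.of_forall hc) hδ
  · obtain ⟨h, hn, hor⟩ := aux2 hatomless hp hp' g f hg hf hr0' hBm hB0 hBfin
      (Filter.Eventually.of_forall hc) hδ
    exact ⟨h, hn, hor.symm.imp (fun x => ⟨x.2, x.1⟩) (fun x => ⟨x.2, x.1⟩)⟩
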